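/- Let u : ℕ → ℝ with u ∈ Λ and suppose Δˢ_u ≠ ∅. Then the least element K of Δˢ_u is the greatest element of Argmax(u): K ∈ Argmax(u) and every k ∈ Argmax(u) satisfies k ≤ K. -/
import Mathlib


open Set Filter

/-- `V u` is the supremum of the sequence `u` (real `sSup`, junk value if unbounded). -/
noncomputable def V (u : ℕ → ℝ) : ℝ := sSup (Set.range u)

/-- `L u` is the limit superior of `u` taken in the extended reals. -/
noncomputable def L (u : ℕ → ℝ) : EReal :=
  Filter.limsup (fun n => ((u n : ℝ) : EReal)) Filter.atTop

/-- `u ∈ Λ` : the supremum of `u` is finite, i.e. `u` is bounded above. -/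
def MemLambda (u : ℕ → ℝ) : Prop := BddAbove (Set.range u)

/-- `Δ_u = {k : max_{0 ≤ j ≤ k} u_j ≥ sup_{j > k} u_j}`. -/
noncomputable def Delta (u : ℕ → ℝ) : Set ℕ :=
  {k | sSup (u '' Set.Ioi k) ≤ sSup (u '' Set.Iic k)}

/-- `Δˢ_u = {k : max_{0 ≤ j ≤ k} u_j > sup_{j > k} u_j}`. -/
noncomputable def DeltaS (u : ℕ → ℝ) : Set ℕ :=
  {k | sSup (u '' Set.Ioi k) < sSup (u '' Set.Iic k)}

/-- `Argmax u = {k : u k = V u}`. -/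
noncomputable def Argmax (u : ℕ → ℝ) : Set ℕ := {k | u k = V u}


/-- for u ∈ Λ with Δˢ_u ≠ ∅, the least element of Δˢ_u is the greatest
element of Argmax u. -/
theorem sInf_deltaS_eq_max_argmax (u : ℕ → ℝ) (hu : MemLambda u)
    (hne : (DeltaS u).Nonempty) :
    sInf (DeltaS u) ∈ Argmax u ∧ ∀ k ∈ Argmax u, k ≤ sInf (DeltaS u) := by
  set K := sInf (DeltaS u) with hKdef
  have hKmem : K ∈ DeltaS u := Nat.sInf_mem hne
  have hbdd : ∀ s : Set ℕ, BddAbove (u '' s) :=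
    fun s => hu.mono (Set.image_subset_range u s)
  have hIic_ne : (u '' Set.Iic K).Nonempty :=
    ⟨u 0, 0, Set.mem_Iic.mpr (Nat.zero_le _), rfl⟩
  have hM_le_V : sSup (u '' Set.Iic K) ≤ V u :=
    csSup_le_csSup hu hIic_ne (Set.image_subset_range u _)
  have part2 : ∀ k ∈ Argmax u, k ≤ K := by
    intro k hk
    by_contra h
    push_neg at h
    have h1 : V u ≤ sSup (u '' Set.Ioi K) :=
      le_csSup (hbdd _) ⟨k, Set.mem_Ioi.mpr h, hk⟩
    exact absurd (lt_of_le_of_lt h1 hKmem) (not_lt.mpr hM_le_V)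
  -- V u = sSup (u '' Iic K)
  have hV_le_M : V u ≤ sSup (u '' Set.Iic K) := by
    have hne0 : (Set.range u).Nonempty := ⟨u 0, 0, rfl⟩
    apply csSup_le hne0
    rintro x ⟨n, rfl⟩
    rcases le_or_gt n K with hn | hn
    · exact le_csSup (hbdd _) ⟨n, Set.mem_Iic.mpr hn, rfl⟩
    · exact le_of_lt (lt_of_le_of_lt (le_csSup (hbdd _) ⟨n, Set.mem_Ioi.mpr hn, rfl⟩) hKmem)
  have hVM : V u = sSup (u '' Set.Iic K) := le_antisymm hV_le_M hM_le_V
  have hmemM : sSup (u '' Set.Iic K) ∈ u '' Set.Iic K :=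
    hIic_ne.csSup_mem ((Set.finite_Iic K).image u)
  obtain ⟨j0, hj0K, hj0⟩ := hmemM
  -- the set of argmax indices ≤ K
  set T : Set ℕ := {i | i ≤ K ∧ u i = V u} with hTdef
  have hT_ne : T.Nonempty := ⟨j0, hj0K, by rw [hj0, hVM]⟩
  have hT_bdd : BddAbove T := ⟨K, fun i hi => hi.1⟩
  set j := sSup T with hjdef
  have hjT : j ∈ T := Nat.sSup_mem hT_ne hT_bdd
  rcases eq_or_lt_of_le hjT.1 with hjK | hjK
  · exact ⟨by rw [← hjK]; exact hjT.2, part2⟩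
  · -- j < K : derive contradiction via minimality
    exfalso
    have hIoc_ne : (u '' Set.Ioc j K).Nonempty := ⟨u K, K, ⟨hjK, le_refl K⟩, rfl⟩
    have hmemN : sSup (u '' Set.Ioc j K) ∈ u '' Set.Ioc j K :=
      hIoc_ne.csSup_mem ((Set.finite_Ioc j K).image u)
    obtain ⟨n, hn, hnN⟩ := hmemN
    have hnV : u n < V u := by
      rcases lt_or_eq_of_le (le_csSup hu ⟨n, rfl⟩) with h | h
      · exact h
      · exact absurd (le_csSup hT_bdd ⟨hn.2, h⟩) (not_le.mpr hn.1)
    have hIoiK_lt : sSup (u '' Set.Ioi K) < V u := lt_of_lt_of_le hKmem hM_le_V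
    have hIoij_lt : sSup (u '' Set.Ioi j) < V u := by
      apply lt_of_le_of_lt (b := max (sSup (u '' Set.Ioc j K)) (sSup (u '' Set.Ioi K)))
      · have hne1 : (u '' Set.Ioi j).Nonempty :=
          ⟨u (j+1), j+1, Set.mem_Ioi.mpr (Nat.lt_succ_self j), rfl⟩
        apply csSup_le hne1
        rintro x ⟨m, hm, rfl⟩
        rcases le_or_gt m K with hmK | hmK
        · exact le_trans (le_csSup (s := u '' Set.Ioc j K) (hbdd _) ⟨m, ⟨hm, hmK⟩, rfl⟩) (le_max_left _ _)
        · exact le_trans (le_csSup (s := u '' Set.Ioi K) (hbdd _) ⟨m, Set.mem_Ioi.mpr hmK, rfl⟩) (le_max_right _ _)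
      · exact max_lt (hnN ▸ hnV) hIoiK_lt
    have hjD : j ∈ DeltaS u := by
      have : V u ≤ sSup (u '' Set.Iic j) :=
        hjT.2 ▸ le_csSup (hbdd _) ⟨j, Set.mem_Iic.mpr (le_refl j), rfl⟩
      exact lt_of_lt_of_le hIoij_lt this
    exact absurd (Nat.sInf_le hjD) (not_le.mpr hjK)
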